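/- Let P be a real polynomial such that P(x) ≥ 0 for all x ≥ 0. Then there exist real polynomials P₁ and P₂ such that P(x) = P₁(x)² + x · P₂(x)² for all x ∈ ℝ. -/

import Mathlib

open Polynomial

private lemma rep_mul' {A B Cc D : Polynomial ℝ} :
    (A ^ 2 + X * B ^ 2) * (Cc ^ 2 + X * D ^ 2) =
      (A * Cc + X * B * D) ^ 2 + X * (A * D - B * Cc) ^ 2 := by ring

private lemma eval_nonneg_lim (Q : Polynomial ℝ) (r : ℝ)
    (h : ∀ x, r < x → 0 ≤ Q.eval x) : 0 ≤ Q.eval r := by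
  have ht : Filter.Tendsto (fun x => Q.eval x) (nhdsWithin r (Set.Ioi r)) (nhds (Q.eval r)) :=
    ((Q.continuous_aeval).tendsto r).mono_left nhdsWithin_le_nhds
  exact ge_of_tendsto ht (Filter.eventually_of_mem self_mem_nhdsWithin fun x hx => h x hx)

private lemma key : ∀ n : ℕ, ∀ P : Polynomial ℝ, P.natDegree ≤ n →
    (∀ x : ℝ, 0 ≤ x → 0 ≤ P.eval x) →
    ∃ A B : Polynomial ℝ, P = A ^ 2 + X * B ^ 2 := by
  intro n
  induction n using Nat.strong_induction_on with
  | _ n ih =>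
  intro P hdeg hP
  rcases eq_or_ne P 0 with rfl | hP0
  · exact ⟨0, 0, by ring⟩
  rcases Nat.eq_zero_or_pos P.natDegree with h0 | hpos
  · -- constant case
    have hc : P = C (P.coeff 0) := P.eq_C_of_natDegree_eq_zero h0
    have h0' : 0 ≤ P.coeff 0 := by
      have := hP 0 le_rfl
      rwa [coeff_zero_eq_eval_zero]
    refine ⟨C (Real.sqrt (P.coeff 0)), 0, ?_⟩
    conv_lhs => rw [hc]
    rw [← C_pow, Real.sq_sqrt h0']
    ring
  -- nonconstant: get a complex root
  obtain ⟨z, hz⟩ : ∃ z : ℂ, aeval z P = 0 :=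
    IsAlgClosed.exists_aeval_eq_zero ℂ P (natDegree_pos_iff_degree_pos.mp hpos).ne'
  rcases eq_or_ne z.im 0 with him | him
  · -- real root r
    lift z to ℝ using him with r
    have hr : P.eval r = 0 := by
      erw [aeval_ofReal, RCLike.ofReal_eq_zero] at hz; exact hz
    rcases lt_trichotomy r 0 with hrneg | hrzero | hrpos
    · -- negative root
      obtain ⟨Q, hQ⟩ := dvd_iff_isRoot.mpr hr
      have hQ0 : Q ≠ 0 := by rintro rfl; rw [mul_zero] at hQ; exact hP0 hQ
      have hdQ : Q.natDegree < n := by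
        have h1 := natDegree_mul (X_sub_C_ne_zero r) hQ0
        rw [← hQ, natDegree_X_sub_C] at h1
        omega
      have hQnn : ∀ x : ℝ, 0 ≤ x → 0 ≤ Q.eval x := by
        intro x hx
        have h1 := hP x hx
        rw [hQ, eval_mul, eval_sub, eval_X, eval_C] at h1
        nlinarith
      obtain ⟨A, B, hAB⟩ := ih Q.natDegree hdQ Q le_rfl hQnn
      have hl : X - C r = (C (Real.sqrt (-r))) ^ 2 + X * (1 : Polynomial ℝ) ^ 2 := by
        rw [← C_pow, Real.sq_sqrt (by linarith : (0:ℝ) ≤ -r), C_neg]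
        ring
      exact ⟨C (Real.sqrt (-r)) * A + X * 1 * B, C (Real.sqrt (-r)) * B - 1 * A,
        by rw [hQ, hl, hAB, rep_mul']⟩
    · -- root at 0
      subst hrzero
      have hdvd : X ∣ P := by
        simpa using dvd_iff_isRoot.mpr hr
      obtain ⟨Q, hQ⟩ := hdvd
      have hQ0 : Q ≠ 0 := by rintro rfl; rw [mul_zero] at hQ; exact hP0 hQ
      have hdQ : Q.natDegree < n := by
        have h1 := natDegree_mul (X_ne_zero (R := ℝ)) hQ0
        rw [← hQ, natDegree_X] at h1
        omega
      have hQpos : ∀ x : ℝ, 0 < x → 0 ≤ Q.eval x := by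
        intro x hx
        have h1 := hP x hx.le
        rw [hQ, eval_mul, eval_X] at h1
        nlinarith
      have hQnn : ∀ x : ℝ, 0 ≤ x → 0 ≤ Q.eval x := by
        intro x hx
        rcases eq_or_lt_of_le hx with rfl | hx'
        · exact eval_nonneg_lim Q 0 hQpos
        · exact hQpos x hx'
      obtain ⟨A, B, hAB⟩ := ih Q.natDegree hdQ Q le_rfl hQnn
      exact ⟨X * B, A, by rw [hQ, hAB]; ring⟩
    · -- positive root: even multiplicity via derivative
      have hd : P.derivative.eval r = 0 := by
        have hmin : IsLocalMin (fun x => P.eval x) r := by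
          filter_upwards [isOpen_Ioi.mem_nhds hrpos] with x hx
          simp only [hr]
          exact hP x (le_of_lt hx)
        have h1 := hmin.deriv_eq_zero
        rwa [Polynomial.deriv] at h1
      obtain ⟨Q1, hQ1⟩ := dvd_iff_isRoot.mpr hr
      have hQ1r : Q1.eval r = 0 := by
        have h1 : P.derivative.eval r = Q1.eval r := by
          rw [hQ1, derivative_mul]
          simp [derivative_X_sub_C]
        rw [← h1, hd]
      obtain ⟨R, hR⟩ := dvd_iff_isRoot.mpr hQ1r
      have hP2 : P = (X - C r) ^ 2 * R := by rw [hQ1, hR]; ring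
      have hR0 : R ≠ 0 := by rintro rfl; rw [mul_zero] at hP2; exact hP0 hP2
      have hdR : R.natDegree < n := by
        have h1 := natDegree_mul (pow_ne_zero 2 (X_sub_C_ne_zero r)) hR0
        rw [← hP2, natDegree_pow, natDegree_X_sub_C] at h1
        omega
      have hRpos : ∀ x : ℝ, 0 ≤ x → x ≠ r → 0 ≤ R.eval x := by
        intro x hx hxr
        have h1 := hP x hx
        rw [hP2, eval_mul, eval_pow, eval_sub, eval_X, eval_C] at h1
        have hne : x - r ≠ 0 := sub_ne_zero.mpr hxr
        have h2 : 0 < (x - r) ^ 2 := by positivity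
        nlinarith
      have hRnn : ∀ x : ℝ, 0 ≤ x → 0 ≤ R.eval x := by
        intro x hx
        rcases eq_or_ne x r with rfl | hxr
        · exact eval_nonneg_lim R x fun y hy => hRpos y (by linarith) (by linarith)
        · exact hRpos x hx hxr
      obtain ⟨A, B, hAB⟩ := ih R.natDegree hdR R le_rfl hRnn
      exact ⟨(X - C r) * A, (X - C r) * B, by rw [hP2, hAB]; ring⟩
  · -- nonreal root: quadratic factor
    obtain ⟨Q, hQ⟩ := P.quadratic_dvd_of_aeval_eq_zero_im_ne_zero hz him
    set q : Polynomial ℝ := X ^ 2 - C (2 * z.re) * X + C (‖z‖ ^ 2) with hqdef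
    have hqeval : ∀ x : ℝ, q.eval x = (x - z.re) ^ 2 + z.im ^ 2 := by
      intro x
      have h1 : ‖z‖ ^ 2 = z.re ^ 2 + z.im ^ 2 := by
        rw [Complex.sq_norm, Complex.normSq_apply]; ring
      simp only [hqdef, eval_add, eval_sub, eval_pow, eval_mul, eval_X, eval_C]
      rw [h1]; ring
    have hqpos : ∀ x : ℝ, 0 < q.eval x := by
      intro x
      rw [hqeval]
      have : 0 < z.im ^ 2 := by positivity
      nlinarith [sq_nonneg (x - z.re)]
    have hq0 : q ≠ 0 := fun h => by simpa [h] using hqpos 0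
    have hqdeg : q.natDegree = 2 := by rw [hqdef]; compute_degree!
    have hQ0 : Q ≠ 0 := by rintro rfl; rw [mul_zero] at hQ; exact hP0 hQ
    have hdQ : Q.natDegree < n := by
      have h1 := natDegree_mul hq0 hQ0
      rw [← hQ, hqdeg] at h1
      omega
    have hQnn : ∀ x : ℝ, 0 ≤ x → 0 ≤ Q.eval x := by
      intro x hx
      have h1 := hP x hx
      rw [hQ, eval_mul] at h1
      nlinarith [hqpos x]
    obtain ⟨A, B, hAB⟩ := ih Q.natDegree hdQ Q le_rfl hQnn
    have hre : z.re ≤ ‖z‖ := by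
      exact Complex.re_le_norm z
    have hqrep : q = (X - C ‖z‖) ^ 2 + X * (C (Real.sqrt (2 * (‖z‖ - z.re)))) ^ 2 := by
      apply Polynomial.funext
      intro x
      have h2 : Real.sqrt (2 * (‖z‖ - z.re)) ^ 2 = 2 * (‖z‖ - z.re) :=
        Real.sq_sqrt (by linarith)
      have h1 : ‖z‖ ^ 2 = z.re ^ 2 + z.im ^ 2 := by
        rw [Complex.sq_norm, Complex.normSq_apply]; ring
      simp only [hqdef, eval_add, eval_sub, eval_pow, eval_mul, eval_X, eval_C, h2]
      ring
    exact ⟨(X - C ‖z‖) * A + X * (C (Real.sqrt (2 * (‖z‖ - z.re)))) * B,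
      (X - C ‖z‖) * B - (C (Real.sqrt (2 * (‖z‖ - z.re)))) * A,
      by rw [hQ, hqrep, hAB, rep_mul']⟩

/-- A real polynomial nonnegative on `[0, ∞)` can be written as `P₁² + X · P₂²`. -/
theorem stmt_6 (P : Polynomial ℝ) (hP : ∀ x : ℝ, 0 ≤ x → 0 ≤ P.eval x) :
    ∃ P₁ P₂ : Polynomial ℝ, ∀ x : ℝ,
      P.eval x = (P₁.eval x) ^ 2 + x * (P₂.eval x) ^ 2 := by
  obtain ⟨A, B, hAB⟩ := key P.natDegree P le_rfl hP
  exact ⟨A, B, fun x => by rw [hAB]; simp⟩
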